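/- (Ideal form of the wheel conditions, second ideal.) For every k ≥ 3 and every d = (d1, …, dk) ∈ ℤ^k, the monomial shuffle element Sh_k(d) lies in the ideal of the Laurent polynomial ring R[z1^{±1}, …, zk^{±1}] generated by q2·z1 − z2 and q1·z2 − z3; that is, there exist Laurent polynomials a, b ∈ R[z1^{±1}, …, zk^{±1}] with Sh_k(d) = a·(q2·z1 − z2) + b·(q1·z2 − z3). -/

import Mathlib

open MvPolynomial Finset

noncomputable section

/-- `Fk k` is the field `F_k = ℂ(q1, q2, z1, …, zk)`, realized as the fraction field of the
polynomial ring `ℂ[q1, q2, z1, …, zk]`. -/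
abbrev Fk (k : ℕ) : Type := FractionRing (MvPolynomial (Fin 2 ⊕ Fin k) ℂ)

/-- The indeterminate `q1` in `F_k`. -/
def q1F (k : ℕ) : Fk k := algebraMap (MvPolynomial (Fin 2 ⊕ Fin k) ℂ) (Fk k) (X (Sum.inl 0))

/-- The indeterminate `q2` in `F_k`. -/
def q2F (k : ℕ) : Fk k := algebraMap (MvPolynomial (Fin 2 ⊕ Fin k) ℂ) (Fk k) (X (Sum.inl 1))

/-- The indeterminates `z1, …, zk` in `F_k` (zero-indexed: `zF k i` is `z_{i+1}`). -/
def zF (k : ℕ) (i : Fin k) : Fk k := algebraMap (MvPolynomial (Fin 2 ⊕ Fin k) ℂ) (Fk k) (X (Sum.inr i))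

/-- `ω(x, y) = (x − q·y)(y − q1·x)(y − q2·x)/(x − y)`, where `q = q1·q2`. -/
def omegaF {K : Type*} [Field K] (q1 q2 x y : K) : K :=
  (x - q1 * q2 * y) * (y - q1 * x) * (y - q2 * x) / (x - y)

/-- The monomial shuffle element
`Sh_k(d) = Σ_{σ ∈ S_k} ∏_{i=1}^k z_{σ(i)}^{d_i} · ∏_{1 ≤ i < j ≤ k} ω(z_{σ(i)}, z_{σ(j)})`,
as a rational expression in the values `z : Fin k → K`. -/
def Sh {K : Type*} [Field K] (q1 q2 : K) {k : ℕ} (z : Fin k → K) (d : Fin k → ℤ) : K :=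
  ∑ σ : Equiv.Perm (Fin k), (∏ i, z (σ i) ^ d i) *
    ∏ p ∈ Finset.univ.filter (fun p : Fin k × Fin k => p.1 < p.2),
      omegaF q1 q2 (z (σ p.1)) (z (σ p.2))

/-- The Laurent polynomial subring `R[z1^{±1}, …, zk^{±1}]` of `K`, where
`R = ℂ[q1^{±1}, q2^{±1}]`: the subring generated by the complex constants,
`q1^{±1}`, `q2^{±1}` and the `z_i^{±1}`. -/
def laurentSubring {K : Type*} [Field K] [Algebra ℂ K] (q1 q2 : K) {k : ℕ} (z : Fin k → K) :
    Subring K :=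
  Subring.closure ((Set.range fun c : ℂ => algebraMap ℂ K c) ∪ {q1, q1⁻¹, q2, q2⁻¹} ∪
    Set.range z ∪ Set.range fun i => (z i)⁻¹)

/-- The `ℂ(q1,q2)`-algebra automorphism of `F_k` fixing `q1, q2` and sending `z_i ↦ z_{τ(i)}`. -/
def permAut (k : ℕ) (τ : Equiv.Perm (Fin k)) : Fk k ≃+* Fk k :=
  IsFractionRing.ringEquivOfRingEquiv
    (MvPolynomial.renameEquiv ℂ (Equiv.sumCongr (Equiv.refl (Fin 2)) τ)).toRingEquiv


/-- substitution remainder lemma -/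
theorem sub_aeval_mem_span {R : Type*} [CommRing R] {σ : Type*}
    (ψ : MvPolynomial σ R →ₐ[R] MvPolynomial σ R) (f : MvPolynomial σ R) :
    f - ψ f ∈ Ideal.span (Set.range fun x : σ => (X x - ψ (X x) : MvPolynomial σ R)) := by
  induction f using MvPolynomial.induction_on with
  | C a =>
      rw [show (C a : MvPolynomial σ R) = algebraMap R _ a from rfl, AlgHom.commutes, sub_self]
      exact Ideal.zero_mem _
  | add p q hp hq =>
      rw [map_add]
      have : p + q - (ψ p + ψ q) = (p - ψ p) + (q - ψ q) := by ring
      rw [this]; exact Ideal.add_mem _ hp hq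
  | mul_X p n hp =>
      rw [map_mul]
      have : p * X n - ψ p * ψ (X n) = p * (X n - ψ (X n)) + ψ (X n) * (p - ψ p) := by ring
      rw [this]
      exact Ideal.add_mem _
        (Ideal.mul_mem_left _ _ (Ideal.subset_span ⟨n, rfl⟩))
        (Ideal.mul_mem_left _ _ hp)

theorem prime_X_sub_X {σ : Type*} [DecidableEq σ] (a b : σ) (hab : a ≠ b) :
    Prime (X a - X b : MvPolynomial σ ℂ) := by
  set ℓ : MvPolynomial σ ℂ := X a - X b with hℓ
  have h0 : ℓ ≠ 0 := by
    intro h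
    have := congrArg (aeval (fun v : σ => if v = a then (1:ℂ) else 0)) h
    simp [hℓ, hab.symm] at this
  set c : σ → σ := fun v => if v = b then a else v with hc
  set κ : MvPolynomial σ ℂ →ₐ[ℂ] MvPolynomial σ ℂ := rename c with hκ
  have hker : Ideal.span {ℓ} = RingHom.ker κ.toRingHom := by
    apply le_antisymm
    · rw [Ideal.span_le]
      intro x hx
      rcases hx with rfl
      have hca : c a = a := by simp [hc, hab]
      have hcb : c b = a := by simp [hc]
      simp only [SetLike.mem_coe, RingHom.mem_ker, AlgHom.toRingHom_eq_coe, RingHom.coe_coe,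
        hκ, hℓ, map_sub, rename_X, hca, hcb, sub_self]
    · intro f hf
      have hf0 : κ f = 0 := hf
      have := sub_aeval_mem_span κ f
      rw [hf0, sub_zero] at this
      refine Ideal.span_le.mpr ?_ this
      rintro x ⟨v, rfl⟩
      simp only [SetLike.mem_coe, hκ, rename_X]
      by_cases hv : v = b
      · have : (X v - X (c v) : MvPolynomial σ ℂ) = -ℓ := by simp [hc, hv, hℓ]
        rw [this]
        exact neg_mem (Ideal.subset_span rfl)
      · have : c v = v := by simp [hc, hv]
        rw [this, sub_self]
        exact Ideal.zero_mem _
  refine (Ideal.span_singleton_prime h0).mp ?_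
  rw [hker]
  exact RingHom.ker_isPrime _

theorem prod_primes_dvd' {α : Type*} [CommMonoidWithZero α] {ι : Type*} [DecidableEq ι]
    (s : Finset ι) (f : ι → α) (hp : ∀ i ∈ s, Prime (f i))
    (hnd : ∀ i ∈ s, ∀ j ∈ s, i ≠ j → ¬ f i ∣ f j) (N : α) (hd : ∀ i ∈ s, f i ∣ N) :
    (∏ i ∈ s, f i) ∣ N := by
  induction s using Finset.induction_on generalizing N with
  | empty => simpa using one_dvd N
  | @insert a s ha ih =>
      obtain ⟨N', rfl⟩ := hd a (mem_insert_self a s)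
      rw [Finset.prod_insert ha]
      refine mul_dvd_mul_left _ (ih (fun i hi => hp i (mem_insert_of_mem hi))
        (fun i hi j hj hij => hnd i (mem_insert_of_mem hi) j (mem_insert_of_mem hj) hij) N'
        (fun i hi => ?_))
      have hia : i ≠ a := by rintro rfl; exact ha hi
      have := hd i (mem_insert_of_mem hi)
      rcases (hp i (mem_insert_of_mem hi)).2.2 _ _ this with h | h
      · exact absurd h (hnd i (mem_insert_of_mem hi) a (mem_insert_self a s) hia)
      · exact h
noncomputable section

theorem prod_pairs_eq {n : ℕ} {M : Type*} [CommMonoid M] (F : Fin n × Fin n → M) :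
    ∏ p ∈ Finset.univ.filter (fun p : Fin n × Fin n => p.1 < p.2), F p
      = ∏ i : Fin n, ∏ j ∈ Ioi i, F (i, j) := by
  rw [Finset.prod_sigma' univ (fun i => Ioi i) (fun i j => F (i, j))]
  refine (Finset.prod_bij (fun (x : Σ _ : Fin n, Fin n) _ => (x.1, x.2)) ?_ ?_ ?_ ?_).symm
  · rintro ⟨i, j⟩ hx
    simp only [Finset.mem_sigma, mem_univ, true_and, mem_Ioi] at hx
    simp [hx]
  · rintro ⟨i, j⟩ hi ⟨i', j'⟩ hj h
    simp only [Prod.mk.injEq] at h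
    exact Sigma.ext h.1 (heq_of_eq h.2)
  · rintro ⟨i, j⟩ hp
    simp only [mem_filter, mem_univ, true_and] at hp
    exact ⟨⟨i, j⟩, by simpa using hp, rfl⟩
  · intros; rfl

theorem prod_pairs_perm {n : ℕ} {R : Type*} [CommRing R] (v : Fin n → R)
    (σ : Equiv.Perm (Fin n)) :
    ∏ p ∈ Finset.univ.filter (fun p : Fin n × Fin n => p.1 < p.2), (v (σ p.1) - v (σ p.2))
      = ((Equiv.Perm.sign σ : ℤ) : R) *
        ∏ p ∈ Finset.univ.filter (fun p : Fin n × Fin n => p.1 < p.2), (v p.1 - v p.2) := by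
  classical
  set s := Finset.univ.filter (fun p : Fin n × Fin n => p.1 < p.2) with hs
  have flip : ∀ w : Fin n → R,
      ∏ p ∈ s, (w p.1 - w p.2) = (-1 : R) ^ s.card * ∏ p ∈ s, (w p.2 - w p.1) := by
    intro w
    rw [← Finset.prod_const, ← Finset.prod_mul_distrib]
    exact Finset.prod_congr rfl fun p _ => by ring
  have det1 : ∀ w : Fin n → R, ∏ p ∈ s, (w p.2 - w p.1) = (Matrix.vandermonde w).det := by
    intro w
    rw [Matrix.det_vandermonde, hs, prod_pairs_eq (fun p => (w p.2 - w p.1))]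
  have hsub : Matrix.vandermonde (fun i => v (σ i))
      = (Matrix.vandermonde v).submatrix σ id := by
    ext i j; simp [Matrix.vandermonde, Matrix.submatrix]
  have det2 : ∏ p ∈ s, (v (σ p.2) - v (σ p.1))
      = ((Equiv.Perm.sign σ : ℤ) : R) * (Matrix.vandermonde v).det := by
    have h := det1 (fun i => v (σ i))
    rw [h, hsub, Matrix.det_permute]
  rw [flip (fun i => v (σ i)), flip v, det2, det1]
  ring

namespace WheelAux

variable {k : ℕ}

abbrev PP (k : ℕ) := MvPolynomial (Fin 2 ⊕ Fin k) ℂ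

def xP (i : Fin k) : PP k := X (Sum.inr i)
def Q1P : PP k := X (Sum.inl 0)
def Q2P : PP k := X (Sum.inl 1)
def etaP (u v : PP k) : PP k := (u - Q1P * Q2P * v) * (v - Q1P * u) * (v - Q2P * u)

def pairs (k : ℕ) : Finset (Fin k × Fin k) := Finset.univ.filter (fun p => p.1 < p.2)

def NT (e : Fin k → ℕ) (σ : Equiv.Perm (Fin k)) : PP k :=
  (∏ i, xP (σ i) ^ e i) * ∏ p ∈ pairs k, etaP (xP (σ p.1)) (xP (σ p.2))

def NN (e : Fin k → ℕ) : PP k :=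
  ∑ σ : Equiv.Perm (Fin k), ((Equiv.Perm.sign σ : ℤ) : PP k) * NT e σ

def DD (k : ℕ) : PP k := ∏ p ∈ pairs k, (xP p.1 - xP p.2)

theorem rename_NT (e : Fin k → ℕ) (a b : Fin k) (σ : Equiv.Perm (Fin k)) :
    rename (Equiv.swap (Sum.inr a : Fin 2 ⊕ Fin k) (Sum.inr b)) (NT e σ)
      = NT e (Equiv.swap a b * σ) := by
  have hτ : ∀ v : Fin k, Equiv.swap (Sum.inr a : Fin 2 ⊕ Fin k) (Sum.inr b) (Sum.inr v)
      = Sum.inr (Equiv.swap a b v) := fun v =>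
    Function.Injective.swap_apply Sum.inr_injective a b v
  have hτl : ∀ j : Fin 2, Equiv.swap (Sum.inr a : Fin 2 ⊕ Fin k) (Sum.inr b) (Sum.inl j)
      = Sum.inl j := fun j => Equiv.swap_apply_of_ne_of_ne (by simp) (by simp)
  simp only [NT, map_mul, map_prod, map_pow, etaP, xP, Q1P, Q2P, map_sub, rename_X, hτ, hτl,
    Equiv.Perm.mul_apply]

theorem rename_NN (e : Fin k → ℕ) (a b : Fin k) (hab : a ≠ b) :
    rename (Equiv.swap (Sum.inr a : Fin 2 ⊕ Fin k) (Sum.inr b)) (NN e) = - NN e := by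
  classical
  set s := Equiv.swap a b with hs
  rw [NN, map_sum]
  have h1 : ∀ σ : Equiv.Perm (Fin k),
      rename (Equiv.swap (Sum.inr a : Fin 2 ⊕ Fin k) (Sum.inr b))
        (((Equiv.Perm.sign σ : ℤ) : PP k) * NT e σ)
      = ((Equiv.Perm.sign σ : ℤ) : PP k) * NT e (s * σ) := by
    intro σ
    rw [map_mul, map_intCast, rename_NT]
  simp only [h1]
  rw [Fintype.sum_equiv (Equiv.mulLeft s)
    (fun σ => ((Equiv.Perm.sign σ : ℤ) : PP k) * NT e (s * σ))
    (fun σ => ((Equiv.Perm.sign (s⁻¹ * σ) : ℤ) : PP k) * NT e σ)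
    (fun σ => by simp [mul_assoc])]
  have h2 : ∀ σ : Equiv.Perm (Fin k),
      ((Equiv.Perm.sign (s⁻¹ * σ) : ℤ) : PP k) = -((Equiv.Perm.sign σ : ℤ) : PP k) := by
    intro σ
    rw [map_mul, map_inv, Equiv.Perm.sign_swap hab]
    norm_num
  simp only [h2, NN, neg_mul, Finset.sum_neg_distrib]

theorem linear_dvd_NN (e : Fin k → ℕ) (a b : Fin k) (hab : a ≠ b) :
    (X (Sum.inr a) - X (Sum.inr b) : PP k) ∣ NN e := by
  classical
  set c : (Fin 2 ⊕ Fin k) → (Fin 2 ⊕ Fin k) :=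
    fun v => if v = Sum.inr b then Sum.inr a else v with hc
  set κ : PP k →ₐ[ℂ] PP k := rename c with hκ
  have hcomp : c ∘ (Equiv.swap (Sum.inr a : Fin 2 ⊕ Fin k) (Sum.inr b)) = c := by
    funext v
    by_cases h1 : v = Sum.inr a
    · simp [h1, Equiv.swap_apply_left, hc, hab]
    · by_cases h2 : v = Sum.inr b
      · simp [h2, Equiv.swap_apply_right, hc, hab]
      · simp [Equiv.swap_apply_of_ne_of_ne h1 h2]
  have hκ0 : κ (NN e) = 0 := by
    have := congrArg (rename c) (rename_NN e a b hab)
    rw [rename_rename, hcomp, map_neg] at this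
    rw [← add_self_eq_zero, hκ]
    nth_rewrite 2 [this]
    rw [add_neg_cancel]
  have hmem := sub_aeval_mem_span κ (NN e)
  rw [hκ0, sub_zero] at hmem
  rw [← Ideal.mem_span_singleton]
  refine Ideal.span_le.mpr ?_ hmem
  rintro x ⟨v, rfl⟩
  simp only [SetLike.mem_coe, hκ, rename_X]
  by_cases hv : v = Sum.inr b
  · have : (X v - X (c v) : PP k) = -(X (Sum.inr a) - X (Sum.inr b)) := by
      simp [hc, hv]
    rw [this]
    exact neg_mem (Ideal.subset_span rfl)
  · have : c v = v := by simp [hc, hv]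
    rw [this, sub_self]
    exact Ideal.zero_mem _

theorem not_dvd_linear (p q : Fin k × Fin k) (hp : p.1 < p.2) (hq : q.1 < q.2) (hne : p ≠ q) :
    ¬ (X (Sum.inr p.1) - X (Sum.inr p.2) : PP k) ∣ (X (Sum.inr q.1) - X (Sum.inr q.2)) := by
  classical
  have hq12 : q.1 ≠ q.2 := ne_of_lt hq
  have hc : ∃ c₀ : Fin k, (c₀ = q.1 ∨ c₀ = q.2) ∧ c₀ ≠ p.1 ∧ c₀ ≠ p.2 := by
    by_cases ha : q.1 = p.1
    · refine ⟨q.2, Or.inr rfl, fun h2 => ?_, fun h2 => ?_⟩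
      · exact (ne_of_gt hq) (h2.trans ha.symm)
      · exact hne (by rw [Prod.ext_iff]; exact ⟨ha.symm, h2.symm⟩)
    · by_cases hb : q.1 = p.2
      · refine ⟨q.2, Or.inr rfl, fun h2 => ?_, fun h2 => ?_⟩
        · have h3 : p.1 < q.1 := by rw [hb]; exact hp
          have h4 : q.1 < p.1 := by rw [← h2]; exact hq
          exact absurd (h3.trans h4) (lt_irrefl _)
        · exact (ne_of_gt hq) (h2.trans hb.symm)
      · exact ⟨q.1, Or.inl rfl, ha, hb⟩
  obtain ⟨c₀, hor, hc1, hc2⟩ := hc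
  set e₀ : PP k →ₐ[ℂ] ℂ :=
    aeval (fun v => if v = (Sum.inr c₀ : Fin 2 ⊕ Fin k) then (1:ℂ) else 0) with he₀
  have hp1 : p.1 ≠ c₀ := fun h => hc1 h.symm
  have hp2 : p.2 ≠ c₀ := fun h => hc2 h.symm
  have hR : e₀ (X (Sum.inr p.1) - X (Sum.inr p.2)) = 0 := by
    simp [he₀, hp1, hp2]
  have hL : e₀ (X (Sum.inr q.1) - X (Sum.inr q.2)) ≠ 0 := by
    rcases hor with h | h
    · have hq2 : q.2 ≠ c₀ := fun h2 => hq12 (h ▸ h2.symm ▸ rfl)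
      simp [he₀, h.symm, hq2]
    · have hq1 : q.1 ≠ c₀ := fun h2 => hq12 (h ▸ h2 ▸ rfl)
      simp [he₀, h.symm, hq1]
  rintro ⟨t, ht⟩
  exact hL (by rw [ht, map_mul, hR, zero_mul])

theorem DD_dvd_NN (e : Fin k → ℕ) : DD k ∣ NN e := by
  classical
  refine prod_primes_dvd' (pairs k) (fun p => (X (Sum.inr p.1) - X (Sum.inr p.2) : PP k))
    (fun p hp => ?_) (fun p hp q hq hne => ?_) (NN e) (fun p hp => ?_)
  · rw [pairs, mem_filter] at hp
    exact prime_X_sub_X _ _ (fun h => (ne_of_lt hp.2) (Sum.inr_injective h))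
  · rw [pairs, mem_filter] at hp hq
    exact not_dvd_linear p q hp.2 hq.2 hne
  · rw [pairs, mem_filter] at hp
    exact linear_dvd_NN e p.1 p.2 (ne_of_lt hp.2)


variable {m : ℕ}

def v0 (m : ℕ) : (Fin 2 ⊕ Fin (m+3)) → PP (m+3) :=
  fun t => match t with
  | Sum.inl j => X (Sum.inl j)
  | Sum.inr i => if i = 0 then xP 0 else if i = 1 then Q2P * xP 0
      else if i = 2 then Q1P * Q2P * xP 0 else xP i

theorem fin_ne_10 : (1 : Fin (m+3)) ≠ 0 := by
  intro h; have := congrArg Fin.val h; simp at this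
theorem fin_ne_20 : (2 : Fin (m+3)) ≠ 0 := by
  intro h; have := congrArg Fin.val h; simp [Fin.val_two] at this
  rw [Nat.mod_eq_of_lt (by omega : 2 < m + 3)] at this; omega
theorem fin_ne_21 : (2 : Fin (m+3)) ≠ 1 := by
  intro h; have := congrArg Fin.val h; simp [Fin.val_two] at this
  rw [Nat.mod_eq_of_lt (by omega : 2 < m + 3)] at this; omega

theorem psi0_eta_zero (i j : Fin (m+3))
    (h : (i = 0 ∧ j = 1) ∨ (i = 1 ∧ j = 2) ∨ (i = 2 ∧ j = 0)) :
    aeval (v0 m) (etaP (xP i) (xP j)) = 0 := by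
  rcases h with ⟨rfl, rfl⟩ | ⟨rfl, rfl⟩ | ⟨rfl, rfl⟩ <;>
  · simp only [etaP, xP, Q1P, Q2P, map_sub, map_mul, aeval_X, v0, fin_ne_10, fin_ne_20,
      fin_ne_21, if_true, if_false, if_neg, if_pos, ite_true, ite_false, reduceIte]
    ring

theorem psi0_NT_zero (e : Fin (m+3) → ℕ) (σ : Equiv.Perm (Fin (m+3))) :
    aeval (v0 m) (NT e σ) = 0 := by
  classical
  rw [NT, map_mul]
  refine mul_eq_zero_of_right _ ?_
  rw [map_prod, Finset.prod_eq_zero_iff]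
  have hab : σ⁻¹ 0 ≠ σ⁻¹ 1 := fun h => fin_ne_10 (Equiv.injective σ⁻¹ h.symm)
  have hbc : σ⁻¹ 1 ≠ σ⁻¹ 2 := fun h => fin_ne_21 (Equiv.injective σ⁻¹ h.symm)
  have hac : σ⁻¹ 0 ≠ σ⁻¹ 2 := fun h => fin_ne_20 (Equiv.injective σ⁻¹ h.symm)
  rcases lt_or_gt_of_ne hab with h1 | h1
  · have hz : aeval (v0 m) (etaP (xP (σ (σ⁻¹ 0))) (xP (σ (σ⁻¹ 1)))) = 0 := by
      simp only [Equiv.Perm.inv_def, Equiv.apply_symm_apply]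
      exact psi0_eta_zero 0 1 (Or.inl ⟨rfl, rfl⟩)
    exact ⟨(σ⁻¹ 0, σ⁻¹ 1), by simpa [pairs] using h1, hz⟩
  · rcases lt_or_gt_of_ne hbc with h2 | h2
    · have hz : aeval (v0 m) (etaP (xP (σ (σ⁻¹ 1))) (xP (σ (σ⁻¹ 2)))) = 0 := by
        simp only [Equiv.Perm.inv_def, Equiv.apply_symm_apply]
        exact psi0_eta_zero 1 2 (Or.inr (Or.inl ⟨rfl, rfl⟩))
      exact ⟨(σ⁻¹ 1, σ⁻¹ 2), by simpa [pairs] using h2, hz⟩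
    · have h3 : σ⁻¹ 2 < σ⁻¹ 0 := h2.trans h1
      have hz : aeval (v0 m) (etaP (xP (σ (σ⁻¹ 2))) (xP (σ (σ⁻¹ 0)))) = 0 := by
        simp only [Equiv.Perm.inv_def, Equiv.apply_symm_apply]
        exact psi0_eta_zero 2 0 (Or.inr (Or.inr ⟨rfl, rfl⟩))
      exact ⟨(σ⁻¹ 2, σ⁻¹ 0), by simpa [pairs] using h3, hz⟩

theorem psi0_NN_zero (e : Fin (m+3) → ℕ) : aeval (v0 m) (NN e) = 0 := by
  rw [NN, map_sum]
  refine Finset.sum_eq_zero fun σ _ => ?_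
  rw [map_mul, psi0_NT_zero, mul_zero]

def wev (m : ℕ) : (Fin 2 ⊕ Fin (m+3)) → ℂ :=
  fun t => match t with
  | Sum.inl j => if j = 0 then 2 else 3
  | Sum.inr i => if i = 0 then 1 else ((10*(i.val+1) : ℕ) : ℂ)

def nv (m : ℕ) (i : Fin (m+3)) : ℕ :=
  if i = 0 then 1 else if i = 1 then 3 else if i = 2 then 6 else 10*(i.val+1)

theorem wev_v0 (i : Fin (m+3)) : aeval (wev m) (v0 m (Sum.inr i)) = ((nv m i : ℕ) : ℂ) := by
  by_cases h0 : i = 0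
  · subst h0; simp [v0, nv, wev, xP]
  · by_cases h1 : i = 1
    · subst h1; simp [v0, nv, wev, Q2P, xP, fin_ne_10]
    · by_cases h2 : i = 2
      · subst h2; simp [v0, nv, wev, Q1P, Q2P, xP, fin_ne_20, fin_ne_21]; norm_num
      · simp [v0, nv, wev, xP, h0, h1, h2]

theorem nv_injOn (i j : Fin (m+3)) (hij : i ≠ j) : nv m i ≠ nv m j := by
  have hv : i.val ≠ j.val := fun h => hij (Fin.ext h)
  unfold nv
  split_ifs <;> omega

theorem psi0_DD_ne : aeval (v0 m) (DD (m+3)) ≠ 0 := by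
  intro h
  have key : aeval (wev m) (aeval (v0 m) (DD (m+3))) ≠ 0 := by
    rw [DD, map_prod, map_prod, Finset.prod_ne_zero_iff]
    intro p hp
    rw [pairs, Finset.mem_filter] at hp
    have hne : p.1 ≠ p.2 := ne_of_lt hp.2
    simp only [xP, map_sub, aeval_X, wev_v0]
    rw [sub_ne_zero]
    intro hh
    exact nv_injOn p.1 p.2 hne (Nat.cast_injective hh)
  rw [h, map_zero] at key
  exact key rfl

end WheelAux

section Final
open WheelAux

abbrev Fk' (k : ℕ) : Type := FractionRing (MvPolynomial (Fin 2 ⊕ Fin k) ℂ)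

theorem algebraMap_mem_laurent (k : ℕ)
    (q1 q2 : Fk' k) (hq1 : q1 = algebraMap (PP k) (Fk' k) (X (Sum.inl 0)))
    (hq2 : q2 = algebraMap (PP k) (Fk' k) (X (Sum.inl 1)))
    (z : Fin k → Fk' k) (hz : ∀ i, z i = algebraMap (PP k) (Fk' k) (X (Sum.inr i)))
    (f : PP k) :
    algebraMap (PP k) (Fk' k) f ∈
      Subring.closure ((Set.range fun c : ℂ => algebraMap ℂ (Fk' k) c) ∪ {q1, q1⁻¹, q2, q2⁻¹} ∪
        Set.range z ∪ Set.range fun i => (z i)⁻¹) := by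
  induction f using MvPolynomial.induction_on with
  | C a =>
      have h : algebraMap (PP k) (Fk' k) (C a) = algebraMap ℂ (Fk' k) a := by
        rw [← MvPolynomial.algebraMap_eq, ← IsScalarTower.algebraMap_apply]
      rw [h]
      exact Subring.subset_closure (Or.inl (Or.inl (Or.inl ⟨a, rfl⟩)))
  | add p q hp hq => rw [(algebraMap (PP k) (Fk' k)).map_add]; exact Subring.add_mem _ hp hq
  | mul_X p v hp =>
      rw [(algebraMap (PP k) (Fk' k)).map_mul]
      refine Subring.mul_mem _ hp ?_
      rcases v with j | i
      · fin_cases j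
        · exact Subring.subset_closure (Or.inl (Or.inl (Or.inr (by rw [hq1]; exact Set.mem_insert _ _))))
        · exact Subring.subset_closure (Or.inl (Or.inl (Or.inr (by rw [hq2]; exact Set.mem_insert_of_mem _ (Set.mem_insert_of_mem _ (Set.mem_insert _ _))))))
      · exact Subring.subset_closure (Or.inl (Or.inr ⟨i, hz i⟩))

end Final

set_option maxHeartbeats 1600000
set_option synthInstance.maxHeartbeats 400000

open WheelAux in
/-- Ideal form of the wheel conditions, second ideal: for every `k ≥ 3` (written `k = m + 3`)
and `d ∈ ℤ^k`, there are Laurent polynomials `a, b ∈ R[z1^{±1}, …, zk^{±1}]` with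
`Sh_k(d) = a·(q2·z1 − z2) + b·(q1·z2 − z3)`. -/

theorem sh_mem_wheel_ideal_two (m : ℕ) (d : Fin (m + 3) → ℤ) :
    ∃ a b : Fk (m + 3),
      a ∈ laurentSubring (q1F (m + 3)) (q2F (m + 3)) (zF (m + 3)) ∧
      b ∈ laurentSubring (q1F (m + 3)) (q2F (m + 3)) (zF (m + 3)) ∧
      Sh (q1F (m + 3)) (q2F (m + 3)) (zF (m + 3)) d =
        a * (q2F (m + 3) * zF (m + 3) 0 - zF (m + 3) 1)
          + b * (q1F (m + 3) * zF (m + 3) 1 - zF (m + 3) 2) := by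
  classical
  set φ : PP (m+3) →+* Fk (m+3) := algebraMap (PP (m+3)) (Fk (m+3)) with hφdef
  have hinj : Function.Injective φ := IsFractionRing.injective (PP (m+3)) (Fk (m+3))
  have hZ : ∀ i : Fin (m+3), zF (m+3) i ≠ 0 := by
    intro i h
    exact MvPolynomial.X_ne_zero (σ := Fin 2 ⊕ Fin (m+3)) (R := ℂ) (Sum.inr i)
      (hinj (show φ (X (Sum.inr i)) = φ 0 by rw [map_zero]; exact h))
  have hDD0 : DD (m+3) ≠ 0 := by
    rw [DD, Finset.prod_ne_zero_iff]
    intro p hp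
    rw [pairs, Finset.mem_filter] at hp
    exact (prime_X_sub_X (Sum.inr p.1) (Sum.inr p.2)
      (fun hh => (ne_of_lt hp.2) (Sum.inr_injective hh))).ne_zero
  have hφD : φ (DD (m+3)) ≠ 0 :=
    fun h => hDD0 (hinj (show φ (DD (m+3)) = φ 0 by rw [map_zero]; exact h))
  set M : ℕ := ∑ i, (d i).natAbs with hM
  have hdM : ∀ i : Fin (m+3), 0 ≤ d i + (M:ℤ) := by
    intro i
    have h1 : (d i).natAbs ≤ M :=
      Finset.single_le_sum (f := fun j => (d j).natAbs) (fun j _ => Nat.zero_le _)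
        (Finset.mem_univ i)
    omega
  set e : Fin (m+3) → ℕ := fun i => (d i + M).toNat with he
  have hεε : ∀ σ : Equiv.Perm (Fin (m+3)),
      ((Equiv.Perm.sign σ : ℤ) : Fk (m+3)) * ((Equiv.Perm.sign σ : ℤ) : Fk (m+3)) = 1 := by
    intro σ
    rcases Int.units_eq_one_or (Equiv.Perm.sign σ) with h | h <;> rw [h] <;> norm_num
  have key : ∀ σ : Equiv.Perm (Fin (m+3)),
      ((∏ i, zF (m+3) (σ i) ^ d i) *
          ∏ p ∈ pairs (m+3), omegaF (q1F (m+3)) (q2F (m+3)) (zF (m+3) (σ p.1)) (zF (m+3) (σ p.2)))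
        * (φ (DD (m+3)) * (∏ i, zF (m+3) i) ^ M)
      = ((Equiv.Perm.sign σ : ℤ) : Fk (m+3)) * φ (NT e σ) := by
    intro σ
    set ε := ((Equiv.Perm.sign σ : ℤ) : Fk (m+3)) with hεdef
    have hε0 : ε ≠ 0 := left_ne_zero_of_mul_eq_one (hεε σ)
    set Z : Fin (m+3) → Fk (m+3) := zF (m+3) with hZdef
    set A := ∏ i, Z (σ i) ^ d i with hA
    set B := ∏ p ∈ pairs (m+3),
      ((Z (σ p.1) - q1F (m+3) * q2F (m+3) * Z (σ p.2)) * (Z (σ p.2) - q1F (m+3) * Z (σ p.1)) *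
        (Z (σ p.2) - q2F (m+3) * Z (σ p.1))) with hB
    set Cp := ∏ i, Z (σ i) ^ M with hC
    set E := ∏ i, Z (σ i) ^ e i with hE
    set Dv := φ (DD (m+3)) with hDv
    have hω : ∏ p ∈ pairs (m+3),
        omegaF (q1F (m+3)) (q2F (m+3)) (Z (σ p.1)) (Z (σ p.2))
        = B / (∏ p ∈ pairs (m+3), (Z (σ p.1) - Z (σ p.2))) := by
      rw [hB, ← Finset.prod_div_distrib]
      rfl
    have hden : ∏ p ∈ pairs (m+3), (Z (σ p.1) - Z (σ p.2)) = ε * Dv := by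
      have h1 := prod_pairs_perm Z σ
      have h2 : Dv = ∏ p ∈ pairs (m+3), (Z p.1 - Z p.2) := by
        rw [hDv, DD, map_prod]
        refine Finset.prod_congr rfl fun p _ => ?_
        rw [map_sub]
        rfl
      rw [h2]
      exact h1
    have hCeq : (∏ i, Z i) ^ M = Cp := by
      rw [hC, ← Finset.prod_pow]
      exact (Equiv.prod_comp σ (fun i => Z i ^ M)).symm
    have hNT : φ (NT e σ) = E * B := by
      rw [NT, map_mul, map_prod, map_prod]
      congr 1
      · rw [hE]
        refine Finset.prod_congr rfl fun i _ => ?_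
        rw [map_pow]
        rfl
      · rw [hB]
        refine Finset.prod_congr rfl fun p _ => ?_
        simp only [etaP, xP, Q1P, Q2P, map_mul, map_sub]
        rfl
    have hAC : A * Cp = E := by
      rw [hA, hC, hE, ← Finset.prod_mul_distrib]
      refine Finset.prod_congr rfl fun i _ => ?_
      rw [← zpow_natCast (Z (σ i)) M, ← zpow_add₀ (hZ (σ i)), ← zpow_natCast (Z (σ i)) (e i)]
      congr 1
      have hnn := hdM i
      simp only [he]
      omega
    have hεinv : ε⁻¹ = ε := inv_eq_of_mul_eq_one_right (hεε σ)
    have hDinv : Dv⁻¹ * Dv = 1 := inv_mul_cancel₀ hφD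
    rw [hω, hden, hCeq, hNT, ← hAC, div_eq_mul_inv, mul_inv, hεinv]
    linear_combination (ε * A * B * Cp) * hDinv
  have sum_id : Sh (q1F (m+3)) (q2F (m+3)) (zF (m+3)) d * (φ (DD (m+3)) * (∏ i, zF (m+3) i) ^ M)
      = φ (NN e) := by
    rw [Sh, NN, map_sum, Finset.sum_mul]
    refine Finset.sum_congr rfl fun σ _ => ?_
    rw [map_mul, map_intCast]
    exact key σ
  obtain ⟨G, hG⟩ := DD_dvd_NN e
  have hPi : (∏ i, zF (m+3) i) ^ M ≠ 0 :=
    pow_ne_zero _ (Finset.prod_ne_zero_iff.mpr fun i _ => hZ i)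
  have hShG : Sh (q1F (m+3)) (q2F (m+3)) (zF (m+3)) d
      = φ G * ((∏ i, (zF (m+3) i)⁻¹) ^ M) := by
    have h1 : Sh (q1F (m+3)) (q2F (m+3)) (zF (m+3)) d * ((∏ i, zF (m+3) i) ^ M) = φ G := by
      refine mul_left_cancel₀ hφD ?_
      calc φ (DD (m+3)) * (Sh (q1F (m+3)) (q2F (m+3)) (zF (m+3)) d * (∏ i, zF (m+3) i) ^ M)
          = Sh (q1F (m+3)) (q2F (m+3)) (zF (m+3)) d * (φ (DD (m+3)) * (∏ i, zF (m+3) i) ^ M) := by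
            ring
        _ = φ (NN e) := sum_id
        _ = φ (DD (m+3)) * φ G := by rw [hG, map_mul]
    rw [← h1, Finset.prod_inv_distrib, inv_pow, mul_assoc, mul_inv_cancel₀ hPi, mul_one]
  have hG0 : aeval (v0 m) G = 0 := by
    have h3 : aeval (v0 m) (DD (m+3)) * aeval (v0 m) G = 0 := by
      rw [← map_mul, ← hG, psi0_NN_zero]
    rcases mul_eq_zero.mp h3 with h | h
    · exact absurd h psi0_DD_ne
    · exact h
  have hGmem : G ∈ Ideal.span {(Q2P * xP 0 - xP 1 : PP (m+3)), (Q1P * xP 1 - xP 2 : PP (m+3))} := by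
    have hmem := sub_aeval_mem_span (aeval (v0 m)) G
    rw [show (aeval (v0 m)) G = 0 from hG0, sub_zero] at hmem
    refine Ideal.span_le.mpr ?_ hmem
    rintro x ⟨v, rfl⟩
    have ht1 : (Q2P * xP 0 - xP 1 : PP (m+3)) ∈
        Ideal.span {(Q2P * xP 0 - xP 1 : PP (m+3)), (Q1P * xP 1 - xP 2 : PP (m+3))} :=
      Ideal.subset_span (Set.mem_insert _ _)
    have ht2 : (Q1P * xP 1 - xP 2 : PP (m+3)) ∈
        Ideal.span {(Q2P * xP 0 - xP 1 : PP (m+3)), (Q1P * xP 1 - xP 2 : PP (m+3))} :=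
      Ideal.subset_span (Set.mem_insert_of_mem _ rfl)
    rcases v with j | i
    · simp only [SetLike.mem_coe, aeval_X]
      have hv : v0 m (Sum.inl j) = X (Sum.inl j) := rfl
      rw [hv, sub_self]
      exact Ideal.zero_mem _
    · simp only [SetLike.mem_coe, aeval_X]
      by_cases h0 : i = 0
      · subst h0
        have hv : v0 m (Sum.inr 0) = xP 0 := by simp [v0]
        rw [hv]
        simp only [xP, sub_self]
        exact Ideal.zero_mem _
      · by_cases h1 : i = 1
        · subst h1
          have hv : v0 m (Sum.inr 1) = Q2P * xP 0 := by simp [v0, fin_ne_10]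
          rw [hv]
          have heq : (X (Sum.inr 1) - Q2P * xP 0 : PP (m+3)) = -(Q2P * xP 0 - xP 1) := by
            simp only [xP]; ring
          rw [heq]
          exact neg_mem ht1
        · by_cases h2 : i = 2
          · subst h2
            have hv : v0 m (Sum.inr 2) = Q1P * Q2P * xP 0 := by simp [v0, fin_ne_20, fin_ne_21]
            rw [hv]
            have heq : (X (Sum.inr 2) - Q1P * Q2P * xP 0 : PP (m+3))
                = -(Q1P * (Q2P * xP 0 - xP 1) + (Q1P * xP 1 - xP 2)) := by
              simp only [xP]; ring
            rw [heq]
            exact neg_mem (add_mem (Ideal.mul_mem_left _ _ ht1) ht2)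
          · have hv : v0 m (Sum.inr i) = xP i := by simp [v0, h0, h1, h2]
            rw [hv]
            simp only [xP, sub_self]
            exact Ideal.zero_mem _
  obtain ⟨A, B, hAB⟩ := Ideal.mem_span_pair.mp hGmem
  have hPimem : ((∏ i, (zF (m+3) i)⁻¹) ^ M) ∈
      laurentSubring (q1F (m+3)) (q2F (m+3)) (zF (m+3)) := by
    refine pow_mem (prod_mem fun i _ => ?_) M
    exact Subring.subset_closure (Or.inr ⟨i, rfl⟩)
  refine ⟨φ A * ((∏ i, (zF (m+3) i)⁻¹) ^ M), φ B * ((∏ i, (zF (m+3) i)⁻¹) ^ M), ?_, ?_, ?_⟩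
  · exact mul_mem (algebraMap_mem_laurent (m+3) _ _ rfl rfl _ (fun i => rfl) A) hPimem
  · exact mul_mem (algebraMap_mem_laurent (m+3) _ _ rfl rfl _ (fun i => rfl) B) hPimem
  · rw [hShG, ← hAB, map_add, map_mul, map_mul]
    have ht1 : φ (Q2P * xP 0 - xP 1) = q2F (m+3) * zF (m+3) 0 - zF (m+3) 1 := by
      rw [map_sub, map_mul]; rfl
    have ht2 : φ (Q1P * xP 1 - xP 2) = q1F (m+3) * zF (m+3) 1 - zF (m+3) 2 := by
      rw [map_sub, map_mul]; rfl
    rw [ht1, ht2]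
    ring

end
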